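/- Cobordism of integer matrices (within the set of matrices N such that N + εNᵀ is unimodular, for fixed ε = ±1) is symmetric: if A ⊞ (−B) is null-cobordant then B ⊞ (−A) is null-cobordant. -/
import Mathlib


open Matrix

/-- A square integer matrix is *null-cobordant* (Levine) if, after identifying
its index type with `Fin r ⊕ Fin r`, it is integrally congruent (`N ↦ P * N * Pᵀ`
with `P` invertible over `ℤ`) to a matrix whose upper-left `r × r` block is zero. -/
def NullCobordant {n : Type*} [Fintype n] [DecidableEq n] (N : Matrix n n ℤ) : Prop :=
  ∃ (r : ℕ) (e : n ≃ Fin r ⊕ Fin r) (P : Matrix n n ℤ), IsUnit P.det ∧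
    ∀ i j : Fin r, (P * N * Pᵀ) (e.symm (Sum.inl i)) (e.symm (Sum.inl j)) = 0

lemma NullCobordant.neg {n : Type*} [Fintype n] [DecidableEq n] {N : Matrix n n ℤ}
    (h : NullCobordant N) : NullCobordant (-N) := by
  obtain ⟨r, e, P, hP, hz⟩ := h
  refine ⟨r, e, P, hP, fun i j => ?_⟩
  have : P * -N * Pᵀ = -(P * N * Pᵀ) := by noncomm_ring
  rw [this]
  simp [hz i j]

lemma NullCobordant.reindex {m n : Type*} [Fintype m] [DecidableEq m] [Fintype n]
    [DecidableEq n] {N : Matrix n n ℤ} (f : m ≃ n) (h : NullCobordant N) :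
    NullCobordant (N.submatrix f f) := by
  obtain ⟨r, e, P, hP, hz⟩ := h
  refine ⟨r, f.trans e, P.submatrix f f, ?_, fun i j => ?_⟩
  · rwa [Matrix.det_submatrix_equiv_self]
  · have hT : (P.submatrix f f)ᵀ = Pᵀ.submatrix f f := rfl
    rw [hT, Matrix.submatrix_mul_equiv, Matrix.submatrix_mul_equiv]
    simpa using hz i j

theorem stmt16 {a b : ℕ} (ε : ℤ) (hε : ε = 1 ∨ ε = -1)
    (A : Matrix (Fin a) (Fin a) ℤ) (B : Matrix (Fin b) (Fin b) ℤ)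
    (hA : IsUnit (A + ε • Aᵀ).det) (hB : IsUnit (B + ε • Bᵀ).det)
    (h : NullCobordant (Matrix.fromBlocks A 0 0 (-B))) :
    NullCobordant (Matrix.fromBlocks B 0 0 (-A)) := by
  have key : Matrix.fromBlocks B 0 0 (-A) =
      -((Matrix.fromBlocks A 0 0 (-B)).submatrix Sum.swap Sum.swap) := by
    rw [Matrix.fromBlocks_submatrix_sum_swap_sum_swap]
    ext (i | i) (j | j) <;> simp [Matrix.fromBlocks]
  rw [key]
  have := (h.reindex (Equiv.sumComm (Fin b) (Fin a))).neg
  simpa using this
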